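/- Divergence preservation in the field update: let G and C be matrices with C * G = 0 (discrete curl of a gradient vanishes). If e^{m+1} satisfies (M₁ + (Δt²/4) Cᵀ M₂ C) e^{m+1} = (M₁ - (Δt²/4) Cᵀ M₂ C) e^m + Δt Cᵀ M₂ b^m, then Gᵀ M₁ e^{m+1} = Gᵀ M₁ e^m. -/
import Mathlib

open Matrix

theorem field_update_preserves_divergence {n m k : ℕ}
    (M₁ : Matrix (Fin n) (Fin n) ℝ) (M₂ : Matrix (Fin m) (Fin m) ℝ)
    (C : Matrix (Fin m) (Fin n) ℝ) (G : Matrix (Fin n) (Fin k) ℝ)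
    (hCG : C * G = 0) (Δt : ℝ)
    (e e' : Fin n → ℝ) (b : Fin m → ℝ)
    (hupd : (M₁ + (Δt ^ 2 / 4) • (Cᵀ * M₂ * C)).mulVec e'
        = (M₁ - (Δt ^ 2 / 4) • (Cᵀ * M₂ * C)).mulVec e + Δt • (Cᵀ * M₂).mulVec b) :
    Gᵀ.mulVec (M₁.mulVec e') = Gᵀ.mulVec (M₁.mulVec e) := by
  have hGC : Gᵀ * Cᵀ = 0 := by
    rw [← transpose_mul, hCG, transpose_zero]
  have h := congrArg Gᵀ.mulVec hupd
  simp only [mulVec_add, add_mulVec, sub_mulVec, mulVec_smul, smul_mulVec,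
    mulVec_mulVec] at h ⊢
  have h1 : Gᵀ * (Cᵀ * M₂ * C) = 0 := by
    rw [← Matrix.mul_assoc, ← Matrix.mul_assoc, hGC, Matrix.zero_mul, Matrix.zero_mul]
  have h2 : Gᵀ * (Cᵀ * M₂) = 0 := by
    rw [← Matrix.mul_assoc, hGC, Matrix.zero_mul]
  simp only [mulVec_sub, mulVec_smul, mulVec_mulVec, h1, h2, zero_mulVec, smul_zero,
    add_zero, sub_zero] at h
  exact h
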